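/- Cross-strategy marginal-cost lower bound (inequality (proof:SuffCond6) in the proof of Theorem 2): In the service-chain model, let (φ,t) be feasible for r with a marginal vector λ satisfying the sufficient-optimality condition, and let (φ†,t†) be any pair feasible for the same r, with total link flows F†_{ij} and workloads G†_i. Then Σ_{(i,j)∈E} D'_{ij}(F_{ij})·F†_{ij} + Σ_{i∈V} C'_i(G_i)·G†_i ≥ Σ_{i∈V} Σ_{a∈A} λ_i(a,0)·r_i(a), where F_{ij} and G_i are the flows and workloads of (φ,t). -/

import Mathlib

open scoped BigOperators
open Classical

/-- The service-chain network model: a finite directed graph, a finite set of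
applications, each with a chain length, a destination, packet sizes and computation
weights, together with nondecreasing convex continuously differentiable link and
computation cost functions (with their derivatives). -/
structure SCNet (V A : Type) [Fintype V] [DecidableEq V] [Fintype A] where
  /-- the edge relation -/
  E : V → V → Prop
  /-- chain length of each application -/
  K : A → ℕ
  /-- destination of each application -/
  dest : A → V
  /-- packet size of each stage -/
  L : A → ℕ → ℝ
  hL : ∀ a k, k ≤ K a → 0 < L a k
  /-- computation weights -/
  w : V → A → ℕ → ℝ
  hw : ∀ i a k, k ≤ K a → 0 < w i a k
  /-- link cost functions -/
  D : V → V → ℝ → ℝ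
  /-- derivative of the link cost functions -/
  D' : V → V → ℝ → ℝ
  /-- computation cost functions -/
  C : V → ℝ → ℝ
  /-- derivative of the computation cost functions -/
  C' : V → ℝ → ℝ
  hD_mono : ∀ i j, E i j → MonotoneOn (D i j) (Set.Ici 0)
  hD_conv : ∀ i j, E i j → ConvexOn ℝ (Set.Ici 0) (D i j)
  hD_deriv : ∀ i j, E i j → ∀ x ∈ Set.Ici (0 : ℝ),
    HasDerivWithinAt (D i j) (D' i j x) (Set.Ici 0) x
  hD'_cont : ∀ i j, E i j → ContinuousOn (D' i j) (Set.Ici 0)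
  hC_mono : ∀ i, MonotoneOn (C i) (Set.Ici 0)
  hC_conv : ∀ i, ConvexOn ℝ (Set.Ici 0) (C i)
  hC_deriv : ∀ i, ∀ x ∈ Set.Ici (0 : ℝ),
    HasDerivWithinAt (C i) (C' i x) (Set.Ici 0) x
  hC'_cont : ∀ i, ContinuousOn (C' i) (Set.Ici 0)

variable {V A : Type} [Fintype V] [DecidableEq V] [Fintype A]

/-- A forwarding strategy: `φ i (some j) a k` is the fraction of stage-(a,k) traffic
that node `i` forwards to node `j`; `φ i none a k` is the fraction forwarded to `i`'s CPU. -/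
structure IsStrategy (N : SCNet V A) (φ : V → Option V → A → ℕ → ℝ) : Prop where
  nonneg : ∀ i j a k, 0 ≤ φ i j a k
  le_one : ∀ i j a k, φ i j a k ≤ 1
  no_edge : ∀ i j a k, ¬ N.E i j → φ i (some j) a k = 0
  cpu_last : ∀ i a, φ i none a (N.K a) = 0
  sum_one : ∀ i a k, k ≤ N.K a → ¬(i = N.dest a ∧ k = N.K a) →
    φ i none a k + ∑ j, φ i (some j) a k = 1
  sum_dest : ∀ a,
    φ (N.dest a) none a (N.K a) + ∑ j, φ (N.dest a) (some j) a (N.K a) = 0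

/-- A traffic vector for input rates `r` and strategy `φ`. -/
structure IsTraffic (N : SCNet V A) (r : V → A → ℝ) (φ : V → Option V → A → ℕ → ℝ)
    (t : V → A → ℕ → ℝ) : Prop where
  nonneg : ∀ i a k, 0 ≤ t i a k
  base : ∀ i a, t i a 0 = r i a + ∑ j, t j a 0 * φ j (some i) a 0
  step : ∀ i a k, 1 ≤ k → k ≤ N.K a →
    t i a k = (∑ j, t j a k * φ j (some i) a k) + t i a (k - 1) * φ i none a (k - 1)

/-- A pair (strategy, traffic) feasible for the input rates `r`. -/
def Feasible (N : SCNet V A) (r : V → A → ℝ) (φ : V → Option V → A → ℕ → ℝ)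
    (t : V → A → ℕ → ℝ) : Prop :=
  IsStrategy N φ ∧ IsTraffic N r φ t

/-- Total flow (bit/sec) on link `(i,j)`. -/
noncomputable def linkFlow (N : SCNet V A) (φ : V → Option V → A → ℕ → ℝ)
    (t : V → A → ℕ → ℝ) (i j : V) : ℝ :=
  ∑ a, ∑ k ∈ Finset.range (N.K a + 1), N.L a k * (t i a k * φ i (some j) a k)

/-- Total computation workload at node `i`. -/
noncomputable def workload (N : SCNet V A) (φ : V → Option V → A → ℕ → ℝ)
    (t : V → A → ℕ → ℝ) (i : V) : ℝ :=
  ∑ a, ∑ k ∈ Finset.range (N.K a + 1), N.w i a k * (t i a k * φ i none a k)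

/-- The aggregated communication and computation cost `T(φ,t)`. -/
noncomputable def totalCost (N : SCNet V A) (φ : V → Option V → A → ℕ → ℝ)
    (t : V → A → ℕ → ℝ) : ℝ :=
  (∑ i, ∑ j, if N.E i j then N.D i j (linkFlow N φ t i j) else 0)
    + ∑ i, N.C i (workload N φ t i)

/-- A marginal-cost vector `λ` for the pair `(φ,t)`, i.e. a solution of the
recursion defining `∂T/∂t_i(a,k)`. -/
structure IsMarginal (N : SCNet V A) (φ : V → Option V → A → ℕ → ℝ)
    (t : V → A → ℕ → ℝ) (lam : V → A → ℕ → ℝ) : Prop where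
  last : ∀ i a, lam i a (N.K a) =
    ∑ j, φ i (some j) a (N.K a) *
      (N.L a (N.K a) * N.D' i j (linkFlow N φ t i j) + lam j a (N.K a))
  step : ∀ i a k, k < N.K a →
    lam i a k =
      (∑ j, φ i (some j) a k * (N.L a k * N.D' i j (linkFlow N φ t i j) + lam j a k))
        + φ i none a k * (N.w i a k * N.C' i (workload N φ t i) + lam i a (k + 1))

/-- `j` is an admissible forwarding direction at node `i` and stage `(a,k)`:
either a physical out-neighbor, or the CPU provided `k < K a`. -/
def Admissible (N : SCNet V A) (i : V) (a : A) (k : ℕ) : Option V → Prop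
  | some j => N.E i j
  | none => k < N.K a

/-- The modified marginals `δ_{ij}(a,k)`. -/
noncomputable def mdelta (N : SCNet V A) (φ : V → Option V → A → ℕ → ℝ)
    (t : V → A → ℕ → ℝ) (lam : V → A → ℕ → ℝ) (i : V) (a : A) (k : ℕ) :
    Option V → ℝ
  | some j => N.L a k * N.D' i j (linkFlow N φ t i j) + lam j a k
  | none => N.w i a k * N.C' i (workload N φ t i) + lam i a (k + 1)

/-- The sufficient-optimality condition: every direction used at node `i` for stage
`(a,k)` achieves the minimum modified marginal over all admissible directions. -/
def SuffCond (N : SCNet V A) (φ : V → Option V → A → ℕ → ℝ)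
    (t : V → A → ℕ → ℝ) (lam : V → A → ℕ → ℝ) : Prop :=
  ∀ i a k, k ≤ N.K a → ∀ j, Admissible N i a k j → 0 < φ i j a k →
    ∀ j', Admissible N i a k j' →
      mdelta N φ t lam i a k j ≤ mdelta N φ t lam i a k j'

/-- Auxiliary telescoping lemma. -/
lemma scnet_tele_aux (Q H : ℕ → ℝ) (c : ℝ) :
    ∀ n : ℕ, Q 0 = c - H 0 → (∀ k < n, Q (k + 1) = H k - H (k + 1)) →
      ∑ k ∈ Finset.range (n + 1), Q k = c - H n := by
  intro n
  induction n with
  | zero => intro h0 _; simpa using h0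
  | succ n ih =>
    intro h0 hs
    rw [Finset.sum_range_succ, ih h0 (fun k hk => hs k (Nat.lt_succ_of_lt hk)),
      hs n (Nat.lt_succ_self n)]
    ring

/-- Auxiliary triple sum swap. -/
lemma scnet_sum_swap3 {α β γ : Type*} (s : Finset α) (u : Finset β) (v : Finset γ)
    (f : α → β → γ → ℝ) :
    ∑ i ∈ s, ∑ j ∈ u, ∑ k ∈ v, f i j k
      = ∑ k ∈ v, ∑ i ∈ s, ∑ j ∈ u, f i j k := by
  rw [Finset.sum_congr rfl fun i (_ : i ∈ s) =>
    (Finset.sum_comm : ∑ j ∈ u, ∑ k ∈ v, f i j k = ∑ k ∈ v, ∑ j ∈ u, f i j k)]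
  exact Finset.sum_comm

/-- At the destination, all final-stage forwarding fractions vanish. -/
lemma scnet_strat_dest_zero (N : SCNet V A) {φ : V → Option V → A → ℕ → ℝ}
    (hφ : IsStrategy N φ) (a : A) (j : Option V) :
    φ (N.dest a) j a (N.K a) = 0 := by
  have hsum := hφ.sum_dest a
  have hs : (0:ℝ) ≤ ∑ j, φ (N.dest a) (some j) a (N.K a) :=
    Finset.sum_nonneg fun j _ => hφ.nonneg _ _ _ _
  have hn := hφ.nonneg (N.dest a) none a (N.K a)
  have h1 : ∑ j, φ (N.dest a) (some j) a (N.K a) = 0 := by linarith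
  cases j with
  | none => exact hφ.cpu_last _ _
  | some v =>
    exact (Finset.sum_eq_zero_iff_of_nonneg fun j _ => hφ.nonneg _ _ _ _).mp h1 v
      (Finset.mem_univ v)

/-- The marginal at the destination's final stage vanishes. -/
lemma scnet_lam_dest (N : SCNet V A) {φ : V → Option V → A → ℕ → ℝ}
    {t : V → A → ℕ → ℝ} {lam : V → A → ℕ → ℝ}
    (hφ : IsStrategy N φ) (hlam : IsMarginal N φ t lam) (a : A) :
    lam (N.dest a) a (N.K a) = 0 := by
  rw [hlam.last]
  exact Finset.sum_eq_zero fun j _ => by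
    rw [scnet_strat_dest_zero N hφ a (some j), zero_mul]

/-- A direction with positive fraction is admissible. -/
lemma scnet_adm_of_pos (N : SCNet V A) {φ : V → Option V → A → ℕ → ℝ}
    (hφ : IsStrategy N φ) {i : V} {a : A} {k : ℕ} {x : Option V}
    (hk : k ≤ N.K a) (hx : 0 < φ i x a k) : Admissible N i a k x := by
  cases x with
  | none =>
    show k < N.K a
    rcases lt_or_eq_of_le hk with h | h
    · exact h
    · rw [h, hφ.cpu_last] at hx; exact absurd hx (lt_irrefl 0)
  | some v =>
    show N.E i v
    by_contra hE
    rw [hφ.no_edge i v a k hE] at hx; exact absurd hx (lt_irrefl 0)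

/-- Under the sufficient-optimality condition, the marginal is a lower bound for
all modified marginals of admissible directions. -/
lemma scnet_lam_le_mdelta (N : SCNet V A) {φ : V → Option V → A → ℕ → ℝ}
    {t : V → A → ℕ → ℝ} {lam : V → A → ℕ → ℝ}
    (hφ : IsStrategy N φ) (hlam : IsMarginal N φ t lam)
    (hsuff : SuffCond N φ t lam) (i : V) (a : A) (k : ℕ)
    (hk : k ≤ N.K a) (hnd : ¬(i = N.dest a ∧ k = N.K a))
    (j : Option V) (hj : Admissible N i a k j) :
    lam i a k ≤ mdelta N φ t lam i a k j := by
  have hsum := hφ.sum_one i a k hk hnd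
  have hex : ∃ j0 : Option V, 0 < φ i j0 a k := by
    by_contra h
    push_neg at h
    have hz : ∀ x : Option V, φ i x a k = 0 := fun x =>
      le_antisymm (h x) (hφ.nonneg _ _ _ _)
    rw [hz none, Finset.sum_eq_zero (fun v _ => hz (some v))] at hsum
    norm_num at hsum
  obtain ⟨j0, hj0pos⟩ := hex
  have hadm0 : Admissible N i a k j0 := scnet_adm_of_pos N hφ hk hj0pos
  have key : ∀ x : Option V, φ i x a k * mdelta N φ t lam i a k x
      = φ i x a k * mdelta N φ t lam i a k j0 := by
    intro x
    rcases (hφ.nonneg i x a k).lt_or_eq with h | h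
    · have hax : Admissible N i a k x := scnet_adm_of_pos N hφ hk h
      have h1 := hsuff i a k hk x hax h j0 hadm0
      have h2 := hsuff i a k hk j0 hadm0 hj0pos x hax
      rw [le_antisymm h1 h2]
    · rw [← h, zero_mul, zero_mul]
  have hrew : lam i a k = (∑ v, φ i (some v) a k * mdelta N φ t lam i a k (some v))
      + φ i none a k * mdelta N φ t lam i a k none := by
    rcases lt_or_eq_of_le hk with hlt | heq
    · rw [hlam.step i a k hlt]; rfl
    · rw [heq, hlam.last i a, hφ.cpu_last i a, zero_mul, add_zero]
      rfl
  calc lam i a k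
      = (∑ v, φ i (some v) a k * mdelta N φ t lam i a k (some v))
        + φ i none a k * mdelta N φ t lam i a k none := hrew
    _ = (∑ v, φ i (some v) a k * mdelta N φ t lam i a k j0)
        + φ i none a k * mdelta N φ t lam i a k j0 := by
        rw [key none]
        congr 1
        exact Finset.sum_congr rfl fun v _ => key (some v)
    _ = (φ i none a k + ∑ v, φ i (some v) a k) * mdelta N φ t lam i a k j0 := by
        rw [← Finset.sum_mul]; ring
    _ = mdelta N φ t lam i a k j0 := by rw [hsum, one_mul]
    _ ≤ mdelta N φ t lam i a k j := hsuff i a k hk j0 hadm0 hj0pos j hj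

/-- **Cross-strategy marginal-cost lower bound.** If `(φ,t)` is feasible for `r`
with a marginal vector `λ` satisfying the sufficient-optimality condition, then for
any other pair `(φ†,t†)` feasible for the same `r`, with flows `F†` and workloads
`G†`, one has
`Σ_{(i,j)∈E} D'_{ij}(F_{ij})·F†_{ij} + Σ_i C'_i(G_i)·G†_i ≥ Σ_i Σ_a λ_i(a,0)·r_i(a)`. -/
theorem cross_strategy_marginal_lower_bound
    (N : SCNet V A) (r : V → A → ℝ) (hr : ∀ i a, 0 ≤ r i a)
    (φ : V → Option V → A → ℕ → ℝ) (t : V → A → ℕ → ℝ) (lam : V → A → ℕ → ℝ)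
    (hfeas : Feasible N r φ t) (hlam : IsMarginal N φ t lam)
    (hsuff : SuffCond N φ t lam)
    (φ' : V → Option V → A → ℕ → ℝ) (t' : V → A → ℕ → ℝ)
    (hfeas' : Feasible N r φ' t') :
    ∑ i, ∑ a, lam i a 0 * r i a ≤
      (∑ i, ∑ j, if N.E i j then
          N.D' i j (linkFlow N φ t i j) * linkFlow N φ' t' i j else 0)
        + ∑ i, N.C' i (workload N φ t i) * workload N φ' t' i := by
  obtain ⟨hφ, ht⟩ := hfeas
  obtain ⟨hφ', ht'⟩ := hfeas'
  -- Step 1: rewrite the right-hand side as a per-stage double sum.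
  have hRHS : (∑ i, ∑ j, if N.E i j then
          N.D' i j (linkFlow N φ t i j) * linkFlow N φ' t' i j else 0)
        + ∑ i, N.C' i (workload N φ t i) * workload N φ' t' i
      = ∑ a, ∑ k ∈ Finset.range (N.K a + 1),
          ((∑ i, ∑ j, (if N.E i j then N.D' i j (linkFlow N φ t i j) else 0)
              * (N.L a k * (t' i a k * φ' i (some j) a k)))
            + ∑ i, N.C' i (workload N φ t i)
              * (N.w i a k * (t' i a k * φ' i none a k))) := by
    have hpart1 : (∑ i, ∑ j, if N.E i j then
          N.D' i j (linkFlow N φ t i j) * linkFlow N φ' t' i j else 0)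
        = ∑ a, ∑ k ∈ Finset.range (N.K a + 1), ∑ i, ∑ j,
            (if N.E i j then N.D' i j (linkFlow N φ t i j) else 0)
              * (N.L a k * (t' i a k * φ' i (some j) a k)) := by
      have h1 : ∀ i j : V, (if N.E i j then
            N.D' i j (linkFlow N φ t i j) * linkFlow N φ' t' i j else 0)
          = ∑ a, ∑ k ∈ Finset.range (N.K a + 1),
              (if N.E i j then N.D' i j (linkFlow N φ t i j) else 0)
                * (N.L a k * (t' i a k * φ' i (some j) a k)) := by
        intro i j
        simp only [linkFlow]
        split_ifs with h
        · rw [Finset.mul_sum]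
          exact Finset.sum_congr rfl fun a _ => by rw [Finset.mul_sum]
        · simp
      calc (∑ i, ∑ j, if N.E i j then
              N.D' i j (linkFlow N φ t i j) * linkFlow N φ' t' i j else 0)
          = ∑ i, ∑ j, ∑ a, ∑ k ∈ Finset.range (N.K a + 1),
              (if N.E i j then N.D' i j (linkFlow N φ t i j) else 0)
                * (N.L a k * (t' i a k * φ' i (some j) a k)) := by
            exact Finset.sum_congr rfl fun i _ =>
              Finset.sum_congr rfl fun j _ => h1 i j
        _ = ∑ a, ∑ i, ∑ j, ∑ k ∈ Finset.range (N.K a + 1),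
              (if N.E i j then N.D' i j (linkFlow N φ t i j) else 0)
                * (N.L a k * (t' i a k * φ' i (some j) a k)) :=
            scnet_sum_swap3 _ _ _ _
        _ = ∑ a, ∑ k ∈ Finset.range (N.K a + 1), ∑ i, ∑ j,
              (if N.E i j then N.D' i j (linkFlow N φ t i j) else 0)
                * (N.L a k * (t' i a k * φ' i (some j) a k)) :=
            Finset.sum_congr rfl fun a _ => scnet_sum_swap3 _ _ _ _
    have hpart2 : (∑ i, N.C' i (workload N φ t i) * workload N φ' t' i)
        = ∑ a, ∑ k ∈ Finset.range (N.K a + 1), ∑ i,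
            N.C' i (workload N φ t i)
              * (N.w i a k * (t' i a k * φ' i none a k)) := by
      calc (∑ i, N.C' i (workload N φ t i) * workload N φ' t' i)
          = ∑ i, ∑ a, ∑ k ∈ Finset.range (N.K a + 1),
              N.C' i (workload N φ t i)
                * (N.w i a k * (t' i a k * φ' i none a k)) := by
            refine Finset.sum_congr rfl fun i _ => ?_
            simp only [workload]
            rw [Finset.mul_sum]
            exact Finset.sum_congr rfl fun a _ => by rw [Finset.mul_sum]
        _ = ∑ a, ∑ i, ∑ k ∈ Finset.range (N.K a + 1),
              N.C' i (workload N φ t i)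
                * (N.w i a k * (t' i a k * φ' i none a k)) := Finset.sum_comm
        _ = ∑ a, ∑ k ∈ Finset.range (N.K a + 1), ∑ i,
              N.C' i (workload N φ t i)
                * (N.w i a k * (t' i a k * φ' i none a k)) :=
            Finset.sum_congr rfl fun a _ => Finset.sum_comm
    rw [hpart1, hpart2, ← Finset.sum_add_distrib]
    exact Finset.sum_congr rfl fun a _ => by rw [← Finset.sum_add_distrib]
  rw [hRHS, Finset.sum_comm]
  refine Finset.sum_le_sum fun a _ => ?_
  -- Step 2: per-application inequality.
  -- The telescoping lower bound Q and the boundary term H.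
  set Qe : ℕ → ℝ := fun k =>
    (∑ i, ∑ j, (lam i a k - lam j a k) * (t' i a k * φ' i (some j) a k))
      + ∑ i, (lam i a k - lam i a (k + 1)) * (t' i a k * φ' i none a k) with hQe
  set He : ℕ → ℝ := fun k =>
    ∑ i, lam i a (k + 1) * (t' i a k * φ' i none a k) with hHe
  -- Q k equals (inflow-corrected) traffic pairing minus H k.
  have hQ : ∀ k, k ≤ N.K a → Qe k
      = ((∑ i, lam i a k * t' i a k)
          - ∑ i, lam i a k * ∑ i', t' i' a k * φ' i' (some i) a k) - He k := by
    intro k hk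
    have e1 : ∀ i, lam i a k * ((∑ j, t' i a k * φ' i (some j) a k)
        + t' i a k * φ' i none a k) = lam i a k * t' i a k := by
      intro i
      by_cases hd : i = N.dest a ∧ k = N.K a
      · have hlz : lam i a k = 0 := by
          rw [hd.1, hd.2]; exact scnet_lam_dest N hφ hlam a
        rw [hlz, zero_mul, zero_mul]
      · have hso := hφ'.sum_one i a k hk hd
        have hfac : (∑ j, t' i a k * φ' i (some j) a k) + t' i a k * φ' i none a k
            = t' i a k * (φ' i none a k + ∑ j, φ' i (some j) a k) := by
          rw [mul_add, Finset.mul_sum]; ring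
        rw [hfac, hso, mul_one]
    have hA : (∑ i, ∑ j, lam i a k * (t' i a k * φ' i (some j) a k))
        + (∑ i, lam i a k * (t' i a k * φ' i none a k))
        = ∑ i, lam i a k * t' i a k := by
      rw [← Finset.sum_add_distrib]
      refine Finset.sum_congr rfl fun i _ => ?_
      rw [← e1 i, mul_add, Finset.mul_sum]
    have hB : (∑ i, ∑ j, lam j a k * (t' i a k * φ' i (some j) a k))
        = ∑ i, lam i a k * ∑ i', t' i' a k * φ' i' (some i) a k := by
      rw [Finset.sum_comm]
      exact Finset.sum_congr rfl fun j _ => by rw [Finset.mul_sum]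
    have hsplit1 : (∑ i, ∑ j, (lam i a k - lam j a k)
          * (t' i a k * φ' i (some j) a k))
        = (∑ i, ∑ j, lam i a k * (t' i a k * φ' i (some j) a k))
          - (∑ i, ∑ j, lam j a k * (t' i a k * φ' i (some j) a k)) := by
      rw [← Finset.sum_sub_distrib]
      refine Finset.sum_congr rfl fun i _ => ?_
      rw [← Finset.sum_sub_distrib]
      exact Finset.sum_congr rfl fun j _ => by ring
    have hsplit2 : (∑ i, (lam i a k - lam i a (k + 1))
          * (t' i a k * φ' i none a k))
        = (∑ i, lam i a k * (t' i a k * φ' i none a k)) - He k := by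
      rw [hHe, ← Finset.sum_sub_distrib]
      exact Finset.sum_congr rfl fun i _ => by ring
    rw [hQe]
    simp only []
    rw [hsplit1, hsplit2, hB]
    linarith [hA]
  -- Telescoping: the sum of Q over all stages equals the marginal input pairing.
  have htel : ∑ k ∈ Finset.range (N.K a + 1), Qe k
      = ∑ i, lam i a 0 * r i a := by
    have h0 : Qe 0 = (∑ i, lam i a 0 * r i a) - He 0 := by
      rw [hQ 0 (Nat.zero_le _)]
      have : (∑ i, lam i a 0 * t' i a 0)
          - (∑ i, lam i a 0 * ∑ i', t' i' a 0 * φ' i' (some i) a 0)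
          = ∑ i, lam i a 0 * r i a := by
        rw [← Finset.sum_sub_distrib]
        refine Finset.sum_congr rfl fun i _ => ?_
        rw [ht'.base i a]; ring
      linarith [this]
    have hs : ∀ k < N.K a, Qe (k + 1) = He k - He (k + 1) := by
      intro k hk
      rw [hQ (k + 1) (Nat.succ_le_of_lt hk)]
      have : (∑ i, lam i a (k + 1) * t' i a (k + 1))
          - (∑ i, lam i a (k + 1) * ∑ i', t' i' a (k + 1) * φ' i' (some i) a (k + 1))
          = He k := by
        rw [hHe, ← Finset.sum_sub_distrib]
        refine Finset.sum_congr rfl fun i _ => ?_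
        have hstep := ht'.step i a (k + 1) (Nat.succ_le_succ (Nat.zero_le _))
          (Nat.succ_le_of_lt hk)
        simp only [Nat.add_sub_cancel] at hstep
        rw [hstep]; ring
      linarith [this]
    have hHK : He (N.K a) = 0 := by
      rw [hHe]
      exact Finset.sum_eq_zero fun i _ => by rw [hφ'.cpu_last i a, mul_zero, mul_zero]
    rw [scnet_tele_aux Qe He (∑ i, lam i a 0 * r i a) (N.K a) h0 hs, hHK, sub_zero]
  rw [← htel]
  -- Step 3: termwise comparison Q k ≤ P k.
  refine Finset.sum_le_sum fun k hkmem => ?_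
  have hk : k ≤ N.K a := Nat.lt_succ_iff.mp (Finset.mem_range.mp hkmem)
  rw [hQe]
  simp only []
  refine add_le_add ?_ ?_
  · refine Finset.sum_le_sum fun i _ => Finset.sum_le_sum fun j _ => ?_
    by_cases hE : N.E i j
    · rw [if_pos hE]
      by_cases hd : i = N.dest a ∧ k = N.K a
      · have hz : φ' i (some j) a k = 0 := by
          rw [hd.1, hd.2]; exact scnet_strat_dest_zero N hφ' a (some j)
        rw [hz]; simp
      · have hle := scnet_lam_le_mdelta N hφ hlam hsuff i a k hk hd (some j) hE
        have hle' : lam i a k - lam j a k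
            ≤ N.L a k * N.D' i j (linkFlow N φ t i j) := by
          simp only [mdelta] at hle; linarith
        have hf : (0:ℝ) ≤ t' i a k * φ' i (some j) a k :=
          mul_nonneg (ht'.nonneg _ _ _) (hφ'.nonneg _ _ _ _)
        calc (lam i a k - lam j a k) * (t' i a k * φ' i (some j) a k)
            ≤ (N.L a k * N.D' i j (linkFlow N φ t i j))
              * (t' i a k * φ' i (some j) a k) :=
              mul_le_mul_of_nonneg_right hle' hf
          _ = N.D' i j (linkFlow N φ t i j)
              * (N.L a k * (t' i a k * φ' i (some j) a k)) := by ring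
    · rw [if_neg hE, hφ'.no_edge i j a k hE]
      simp
  · refine Finset.sum_le_sum fun i _ => ?_
    by_cases hK : k = N.K a
    · have hz : φ' i none a k = 0 := by rw [hK]; exact hφ'.cpu_last i a
      rw [hz]; simp
    · have hklt : k < N.K a := lt_of_le_of_ne hk hK
      have hnd : ¬(i = N.dest a ∧ k = N.K a) := fun h => hK h.2
      have hle := scnet_lam_le_mdelta N hφ hlam hsuff i a k hk hnd none hklt
      have hle' : lam i a k - lam i a (k + 1)
          ≤ N.w i a k * N.C' i (workload N φ t i) := by
        simp only [mdelta] at hle; linarith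
      have hf : (0:ℝ) ≤ t' i a k * φ' i none a k :=
        mul_nonneg (ht'.nonneg _ _ _) (hφ'.nonneg _ _ _ _)
      calc (lam i a k - lam i a (k + 1)) * (t' i a k * φ' i none a k)
          ≤ (N.w i a k * N.C' i (workload N φ t i))
            * (t' i a k * φ' i none a k) := mul_le_mul_of_nonneg_right hle' hf
        _ = N.C' i (workload N φ t i)
            * (N.w i a k * (t' i a k * φ' i none a k)) := by ring
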